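/- arXiv:1806.02926 — 4 statements merged into one kernel-verified Lean document; each statement's English description precedes it below -/
import Mathlib

section
/- Continuity of a Pettis-integral in a parameter: let E be a quasi-complete locally convex Hausdorff space (or a Banach space), (X,Σ,μ) a measure space, T a metric space, and f : X × T → E such that (a) f(·,t) is Pettis-integrable on Σ for each t ∈ T, (b) f(x,·) is continuous at t₀ ∈ T for μ-a.e. x, and (c) there is a neighbourhood U of t₀ and a Pettis-integrable ψ on Σ such that for every t ∈ U and every e' ∈ E' one has |⟨e', f(x,t)⟩| ≤ |⟨e', ψ(x)⟩| for μ-a.e. x. Then for every Λ ∈ Σ the function g_Λ(t) := ∫_Λ f(x,t) dμ(x) is well-defined and continuous at t₀. -/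
open MeasureTheory

/-- Auxiliary: if `|e' (φ x)| ≤ |e' (ψ x)|` a.e. for every continuous linear functional
`e'`, and `φ` is a.e. strongly measurable, then `‖φ x‖ ≤ ‖ψ x‖` a.e. -/
lemma ae_norm_le_of_forall_dual {X : Type*} [MeasurableSpace X] {μ : Measure X}
    {E : Type*} [NormedAddCommGroup E] [NormedSpace ℝ E]
    {φ ψ : X → E} (hφ : AEStronglyMeasurable φ μ)
    (h : ∀ e' : E →L[ℝ] ℝ, ∀ᵐ x ∂μ, |e' (φ x)| ≤ |e' (ψ x)|) :
    ∀ᵐ x ∂μ, ‖φ x‖ ≤ ‖ψ x‖ := by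
  rcases subsingleton_or_nontrivial E with hE | hE
  · filter_upwards with x
    rw [Subsingleton.elim (φ x) (ψ x)]
  obtain ⟨g, hg, hφg⟩ := hφ
  obtain ⟨c, hc_count, hc_sub⟩ := hg.isSeparable_range
  choose e' he'norm he'val using fun v : E => exists_dual_vector' ℝ v
  have hae : ∀ᵐ x ∂μ, ∀ v ∈ c, |e' v (φ x)| ≤ |e' v (ψ x)| :=
    (ae_ball_iff hc_count).2 fun v _ => h (e' v)
  filter_upwards [hae, hφg] with x hx hgx
  refine le_of_forall_pos_le_add fun ε hε => ?_
  have hmem : g x ∈ closure c := hc_sub ⟨x, rfl⟩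
  obtain ⟨v, hvc, hvd⟩ := Metric.mem_closure_iff.1 hmem (ε / 2) (by linarith)
  have hb1 : |e' v (φ x)| ≤ |e' v (ψ x)| := hx v hvc
  have h1 : ‖v‖ ≤ |e' v (g x)| + ε / 2 := by
    have hval : e' v v = (‖v‖ : ℝ) := by exact_mod_cast he'val v
    have hdiff : |e' v v - e' v (g x)| ≤ ‖v - g x‖ := by
      calc |e' v v - e' v (g x)| = ‖e' v (v - g x)‖ := by
            rw [map_sub]; rfl
        _ ≤ ‖e' v‖ * ‖v - g x‖ := (e' v).le_opNorm _
        _ ≤ ‖v - g x‖ := by rw [he'norm v]; simp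
    have hd : ‖v - g x‖ < ε / 2 := by
      rw [← dist_eq_norm, dist_comm]; exact hvd
    have hsub := abs_sub_abs_le_abs_sub (e' v v) (e' v (g x))
    have habs : |e' v v| = ‖v‖ := by rw [hval]; exact abs_norm v
    linarith [le_trans hdiff hd.le]
  have h2 : ‖g x‖ ≤ ‖v‖ + ε / 2 := by
    have : ‖g x - v‖ < ε / 2 := by rw [← dist_eq_norm]; exact hvd
    have := norm_sub_norm_le (g x) v
    linarith
  have h3 : |e' v (ψ x)| ≤ ‖ψ x‖ := by
    calc |e' v (ψ x)| = ‖e' v (ψ x)‖ := rfl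
      _ ≤ ‖e' v‖ * ‖ψ x‖ := (e' v).le_opNorm _
      _ ≤ ‖ψ x‖ := by rw [he'norm v]; simp
  rw [hgx]
  calc ‖g x‖ ≤ ‖v‖ + ε / 2 := h2
    _ ≤ |e' v (g x)| + ε := by linarith
    _ = |e' v (φ x)| + ε := by rw [hgx]
    _ ≤ |e' v (ψ x)| + ε := by linarith
    _ ≤ ‖ψ x‖ + ε := by linarith

/-- continuity of a (Bochner/Pettis) integral in a parameter under a
weak domination hypothesis via continuous linear functionals. -/
theorem stmt5 {X : Type*} [MeasurableSpace X] (μ : Measure X)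
    {T : Type*} [MetricSpace T]
    {E : Type*} [NormedAddCommGroup E] [NormedSpace ℝ E] [CompleteSpace E]
    (f : X → T → E) (t₀ : T)
    (ha : ∀ t : T, Integrable (fun x => f x t) μ)
    (hb : ∀ᵐ x ∂μ, ContinuousAt (f x) t₀)
    (hc : ∃ U ∈ nhds t₀, ∃ ψ : X → E, Integrable ψ μ ∧
      ∀ t ∈ U, ∀ e' : E →L[ℝ] ℝ, ∀ᵐ x ∂μ, |e' (f x t)| ≤ |e' (ψ x)|) :
    ∀ Λ : Set X, MeasurableSet Λ →
      ContinuousAt (fun t => ∫ x in Λ, f x t ∂μ) t₀ := by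
  obtain ⟨U, hU, ψ, hψ, hdom⟩ := hc
  intro Λ hΛ
  have key : ∀ t ∈ U, ∀ᵐ x ∂μ, ‖f x t‖ ≤ ‖ψ x‖ := fun t ht =>
    ae_norm_le_of_forall_dual (ha t).aestronglyMeasurable (hdom t ht)
  refine tendsto_integral_filter_of_dominated_convergence (μ := μ.restrict Λ)
    (F := fun t x => f x t) (f := fun x => f x t₀) (fun x => ‖ψ x‖) ?_ ?_ ?_ ?_
  · exact Filter.Eventually.of_forall fun t => ((ha t).restrict (s := Λ)).aestronglyMeasurable
  · filter_upwards [hU] with t ht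
    exact ae_restrict_of_ae (key t ht)
  · exact (hψ.norm).restrict
  · exact ae_restrict_of_ae (hb.mono fun x hx => hx)
end

section
/- Leibniz rule for differentiation under the Pettis integral: let E be a quasi-complete locally convex Hausdorff space (or a Banach space), (X,Σ,μ) a measure space, T ⊂ ℝ^d open, f : X × T → E with (a) f(·,t) Pettis-integrable on Σ for all t, (b) f(x,·) ∈ C¹(T,E) for all x outside a μ-null set N₀, and (c) for each coordinate direction j there is a Pettis-integrable ψ_j such that for every e' ∈ E' one has |∂_{t_j}⟨e', f(x,·)⟩| ≤ |⟨e', ψ_j(x)⟩| on T for μ-a.e. x ∉ N₀. Then g_Λ(t) := ∫_Λ f(x,t) dμ(x) is C¹ on T and ∂_{t_j} g_Λ(t) = ∫_Λ ∂_{t_j} f(x,t) dμ(x) for all t ∈ T and Λ ∈ Σ. -/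
open MeasureTheory
open scoped BigOperators

noncomputable def pD {d : ℕ} {E : Type*} [NormedAddCommGroup E] [NormedSpace ℝ E]
    (i : Fin d) (f : EuclideanSpace ℝ (Fin d) → E) : EuclideanSpace ℝ (Fin d) → E :=
  fun x => fderiv ℝ f x (EuclideanSpace.single i (1 : ℝ))

/-- Iterated partial derivative `∂^β f` for a multi-index `β : Fin d → ℕ`. -/
noncomputable def mD {d : ℕ} {E : Type*} [NormedAddCommGroup E] [NormedSpace ℝ E]
    (β : Fin d → ℕ) (f : EuclideanSpace ℝ (Fin d) → E) : EuclideanSpace ℝ (Fin d) → E :=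
  Fin.foldr d (fun i g => (pD i)^[β i] g) f

section Aux
open TopologicalSpace

lemma euclid_clm_eq_sum {d : ℕ} {E : Type*} [NormedAddCommGroup E] [NormedSpace ℝ E]
    (L : EuclideanSpace ℝ (Fin d) →L[ℝ] E) :
    L = ∑ j : Fin d, (EuclideanSpace.proj j).smulRight (L (EuclideanSpace.single j (1:ℝ))) := by
  refine ContinuousLinearMap.ext fun h => ?_
  have hh : (∑ j : Fin d, (h j) • EuclideanSpace.single j (1:ℝ)) = h := by
    have := (EuclideanSpace.basisFun (Fin d) ℝ).sum_repr h
    simpa [EuclideanSpace.basisFun_apply, EuclideanSpace.basisFun_repr] using this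
  conv_lhs => rw [← hh]
  simp [ContinuousLinearMap.sum_apply, _root_.map_smul]


lemma euclid_coord_le_norm {d : ℕ} (h : EuclideanSpace ℝ (Fin d)) (j : Fin d) :
    |h j| ≤ ‖h‖ := by
  have := abs_real_inner_le_norm (EuclideanSpace.single j (1:ℝ)) h
  simpa [EuclideanSpace.inner_single_left, EuclideanSpace.norm_single] using this

lemma clm_norm_le_sum {d : ℕ} {E : Type*} [NormedAddCommGroup E] [NormedSpace ℝ E]
    (L : EuclideanSpace ℝ (Fin d) →L[ℝ] E) :
    ‖L‖ ≤ ∑ j : Fin d, ‖L (EuclideanSpace.single j (1:ℝ))‖ := by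
  refine L.opNorm_le_bound (Finset.sum_nonneg fun j _ => norm_nonneg _) fun h => ?_
  have hh : (∑ j : Fin d, (h j) • EuclideanSpace.single j (1:ℝ)) = h := by
    have := (EuclideanSpace.basisFun (Fin d) ℝ).sum_repr h
    simpa [EuclideanSpace.basisFun_apply, EuclideanSpace.basisFun_repr] using this
  have hLh : L h = ∑ j : Fin d, (h j) • L (EuclideanSpace.single j (1:ℝ)) := by
    conv_lhs => rw [← hh]
    simp [_root_.map_smul]
  calc ‖L h‖ ≤ ∑ j : Fin d, ‖(h j) • L (EuclideanSpace.single j (1:ℝ))‖ := by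
        rw [hLh]; exact norm_sum_le _ _
    _ ≤ ∑ j : Fin d, ‖L (EuclideanSpace.single j (1:ℝ))‖ * ‖h‖ := by
        refine Finset.sum_le_sum fun j _ => ?_
        rw [norm_smul, mul_comm, Real.norm_eq_abs]
        exact mul_le_mul_of_nonneg_left (euclid_coord_le_norm h j) (norm_nonneg _)
    _ = (∑ j : Fin d, ‖L (EuclideanSpace.single j (1:ℝ))‖) * ‖h‖ := (Finset.sum_mul _ _ _).symm

lemma norming_family {E : Type*} [NormedAddCommGroup E] [NormedSpace ℝ E]
    {S : Set E} (hS : TopologicalSpace.IsSeparable S) :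
    ∃ e' : ℕ → (E →L[ℝ] ℝ), (∀ k, ‖e' k‖ ≤ 1) ∧
      ∀ v ∈ closure S, ∀ w : E, (∀ k, |e' k v| ≤ |e' k w|) → ‖v‖ ≤ ‖w‖ := by
  rcases S.eq_empty_or_nonempty with rfl | hne
  · exact ⟨fun _ => 0, fun _ => by simp, by simp⟩
  obtain ⟨t, htS, htc, htd⟩ := hS.exists_countable_dense_subset
  have htne : t.Nonempty := by
    obtain ⟨v, hv⟩ := hne
    rcases t.eq_empty_or_nonempty with rfl | h
    · simpa using htd hv
    · exact h
  obtain ⟨u, hu⟩ := htc.exists_eq_range htne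
  choose e' he'n he'e using fun k => exists_dual_vector'' ℝ (u k)
  refine ⟨e', he'n, fun v hv w hbd => ?_⟩
  have hvt : v ∈ closure t := closure_minimal htd isClosed_closure hv
  refine le_of_forall_pos_le_add fun ε hε => ?_
  obtain ⟨b, hbt, hdb⟩ := Metric.mem_closure_iff.1 hvt (ε/3) (by positivity)
  rw [hu] at hbt
  obtain ⟨k, rfl⟩ := hbt
  have h2 : |e' k (u k) - e' k v| ≤ ε/3 := by
    calc |e' k (u k) - e' k v| = ‖e' k (u k - v)‖ := by rw [← map_sub]; rfl
      _ ≤ ‖e' k‖ * ‖u k - v‖ := (e' k).le_opNorm _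
      _ ≤ 1 * ‖u k - v‖ := mul_le_mul_of_nonneg_right (he'n k) (norm_nonneg _)
      _ = ‖u k - v‖ := one_mul _
      _ ≤ ε/3 := by rw [← dist_eq_norm, dist_comm]; exact hdb.le
  have h1 : ‖u k‖ ≤ |e' k v| + ε/3 := by
    have habs : |e' k (u k)| ≤ |e' k (u k) - e' k v| + |e' k v| := by
      have := abs_add_le (e' k (u k) - e' k v) (e' k v)
      simpa using this
    have heq : e' k (u k) = ‖u k‖ := by exact_mod_cast he'e k
    have h0 : ‖u k‖ ≤ |e' k (u k)| := by rw [← heq]; exact le_abs_self _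
    linarith
  have h4 : ‖v‖ ≤ ‖u k‖ + ε/3 := by
    have h6 := norm_sub_norm_le v (u k)
    have h7 : ‖v - u k‖ ≤ ε/3 := by rw [← dist_eq_norm] at *; exact hdb.le
    linarith
  have h5 : |e' k w| ≤ ‖w‖ := by
    calc |e' k w| = ‖e' k w‖ := rfl
      _ ≤ ‖e' k‖ * ‖w‖ := (e' k).le_opNorm _
      _ ≤ 1 * ‖w‖ := mul_le_mul_of_nonneg_right (he'n k) (norm_nonneg _)
      _ = ‖w‖ := one_mul _
  linarith [hbd k]

theorem stmt6_aux {X : Type*} [MeasurableSpace X] (μ : Measure X)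
    {d : ℕ} (T : Set (EuclideanSpace ℝ (Fin d))) (hT : IsOpen T)
    {E : Type*} [NormedAddCommGroup E] [NormedSpace ℝ E] [CompleteSpace E]
    (f : X → EuclideanSpace ℝ (Fin d) → E)
    (ha : ∀ t ∈ T, Integrable (fun x => f x t) μ)
    (N₀ : Set X) (hN₀ : μ N₀ = 0)
    (hb : ∀ x ∉ N₀, ContDiffOn ℝ 1 (f x) T)
    (hc : ∀ j : Fin d, ∃ ψ : X → E, Integrable ψ μ ∧
      ∀ e' : E →L[ℝ] ℝ, ∀ᵐ x ∂μ, x ∉ N₀ →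
        ∀ t ∈ T, |pD j (fun s => e' (f x s)) t| ≤ |e' (ψ x)|) :
    ContDiffOn ℝ 1 (fun t => ∫ x, f x t ∂μ) T ∧
      ∀ t ∈ T, ∀ j : Fin d,
        pD j (fun s => ∫ x, f x s ∂μ) t = ∫ x, pD j (f x) t ∂μ := by
  classical
  choose ψ hψint hψbd using hc
  have hae : ∀ᵐ x ∂μ, x ∉ N₀ := by
    rw [MeasureTheory.ae_iff]
    simpa using hN₀
  have hdiff : ∀ x, x ∉ N₀ → ∀ t ∈ T, HasFDerivAt (f x) (fderiv ℝ (f x) t) t := by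
    intro x hx t ht
    have h1 : ContDiffAt ℝ 1 (f x) t := (hb x hx).contDiffAt (hT.mem_nhds ht)
    exact (h1.differentiableAt one_ne_zero).hasFDerivAt
  -- measurability of partial derivatives
  have hmeasD : ∀ t ∈ T, ∀ j : Fin d,
      AEStronglyMeasurable (fun x => fderiv ℝ (f x) t (EuclideanSpace.single j (1:ℝ))) μ := by
    intro t ht j
    obtain ⟨ε, εpos, hball⟩ := Metric.isOpen_iff.1 hT t ht
    set δ : ℕ → ℝ := fun n => ε / (2 * (n + 1)) with hδdef
    have hδpos : ∀ n, 0 < δ n := fun n => by positivity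
    have hmem : ∀ n : ℕ, t + δ n • EuclideanSpace.single j (1:ℝ) ∈ T := by
      intro n
      apply hball
      rw [Metric.mem_ball, dist_eq_norm]
      have : t + δ n • EuclideanSpace.single j (1:ℝ) - t = δ n • EuclideanSpace.single j (1:ℝ) := by abel
      rw [this, norm_smul, EuclideanSpace.norm_single, Real.norm_eq_abs, abs_of_pos (hδpos n), norm_one, mul_one]
      calc δ n = ε / (2 * (n+1)) := rfl
        _ < ε := by
          rw [div_lt_iff₀ (by positivity)]
          nlinarith [εpos]
    apply aestronglyMeasurable_of_tendsto_ae (u := Filter.atTop)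
      (f := fun (n : ℕ) (x : X) => (δ n)⁻¹ • (f x (t + δ n • EuclideanSpace.single j (1:ℝ)) - f x t))
    · intro n
      exact (((ha _ (hmem n)).sub (ha t ht)).aestronglyMeasurable).const_smul _
    · filter_upwards [hae] with x hx
      have hfd := hdiff x hx t ht
      have htend : Filter.Tendsto (fun n : ℕ => ‖(δ n)⁻¹‖) Filter.atTop Filter.atTop := by
        have h1 : ∀ n : ℕ, ‖(δ n)⁻¹‖ = (2/ε) * ((n:ℝ)+1) := by
          intro n
          rw [Real.norm_eq_abs, abs_of_pos (inv_pos.2 (hδpos n))]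
          simp only [hδdef, inv_div]
          ring
        simp_rw [h1]
        apply Filter.Tendsto.const_mul_atTop (by positivity : (0:ℝ) < 2/ε)
        exact Filter.tendsto_atTop_add_const_right _ 1 tendsto_natCast_atTop_atTop
      have := hfd.lim (EuclideanSpace.single j (1:ℝ)) (c := fun n : ℕ => (δ n)⁻¹) htend
      simpa [inv_inv] using this
  -- measurability of full derivative
  have hmeasF' : ∀ t ∈ T, AEStronglyMeasurable (fun x => fderiv ℝ (f x) t) μ := by
    intro t ht
    have hrw : (fun x => fderiv ℝ (f x) t) = fun x => ∑ j : Fin d,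
        (EuclideanSpace.proj j).smulRight (fderiv ℝ (f x) t (EuclideanSpace.single j (1:ℝ))) :=
      funext fun x => euclid_clm_eq_sum _
    rw [hrw]
    apply Finset.aestronglyMeasurable_fun_sum
    intro j _
    have hcont : Continuous fun v : E => (EuclideanSpace.proj (𝕜 := ℝ) j).smulRight v :=
      (ContinuousLinearMap.smulRightL ℝ (EuclideanSpace ℝ (Fin d)) E (EuclideanSpace.proj j)).continuous
    exact hcont.comp_aestronglyMeasurable (hmeasD t ht j)
  -- the key norm bound
  have key : ∀ j : Fin d, ∀ᵐ x ∂μ, ∀ t ∈ T,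
      ‖fderiv ℝ (f x) t (EuclideanSpace.single j (1:ℝ))‖ ≤ ‖ψ j x‖ := by
    intro j
    rcases T.eq_empty_or_nonempty with rfl | hTne
    · filter_upwards with x t ht
      exact absurd ht (by simp)
    have hTsep : IsSeparable T := IsSeparable.of_separableSpace T
    obtain ⟨T₀, hT₀T, hT₀c, hT₀d⟩ := hTsep.exists_countable_dense_subset
    have hT₀ne : T₀.Nonempty := by
      obtain ⟨t, ht⟩ := hTne
      rcases T₀.eq_empty_or_nonempty with rfl | h
      · simpa using hT₀d ht
      · exact h
    obtain ⟨τ, hτ⟩ := hT₀c.exists_eq_range hT₀ne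
    have hτT : ∀ n, τ n ∈ T := fun n => hT₀T (hτ ▸ Set.mem_range_self n)
    choose Sn hSn_sep hSn_ae using fun n : ℕ => (hmeasD (τ n) (hτT n) j).isSeparable_ae_range
    obtain ⟨Sψ, hSψ_sep, hSψ_ae⟩ := (hψint j).aestronglyMeasurable.isSeparable_ae_range
    set S : Set E := (⋃ n, Sn n) ∪ Sψ with hSdef
    have hS_sep : IsSeparable S := (isSeparable_iUnion.2 hSn_sep).union hSψ_sep
    obtain ⟨e', he'norm, he'key⟩ := norming_family hS_sep
    have hbd : ∀ᵐ x ∂μ, ∀ k : ℕ, x ∉ N₀ →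
        ∀ t ∈ T, |pD j (fun s => e' k (f x s)) t| ≤ |e' k (ψ j x)| :=
      MeasureTheory.ae_all_iff.2 fun k => hψbd j (e' k)
    have hmemS : ∀ᵐ x ∂μ, ∀ n : ℕ,
        fderiv ℝ (f x) (τ n) (EuclideanSpace.single j (1:ℝ)) ∈ Sn n :=
      MeasureTheory.ae_all_iff.2 hSn_ae
    filter_upwards [hae, hbd, hmemS, hSψ_ae] with x hx hbdx hmemx hψx
    intro t ht
    have hcontD : ContinuousOn (fun s => fderiv ℝ (f x) s (EuclideanSpace.single j (1:ℝ))) T :=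
      ((hb x hx).continuousOn_fderiv_of_isOpen hT le_rfl).clm_apply continuousOn_const
    obtain ⟨sm, hsm_mem, hsm_lim⟩ := mem_closure_iff_seq_limit.1 (hT₀d ht)
    have hsm_T : ∀ m, sm m ∈ T := fun m => hT₀T (hsm_mem m)
    have htd : Filter.Tendsto sm Filter.atTop (nhdsWithin t T) := by
      rw [tendsto_nhdsWithin_iff]
      exact ⟨hsm_lim, Filter.Eventually.of_forall hsm_T⟩
    have hmemcl : fderiv ℝ (f x) t (EuclideanSpace.single j (1:ℝ)) ∈ closure S := by
      apply mem_closure_of_tendsto (((hcontD t ht).tendsto).comp htd)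
      filter_upwards with m
      have : sm m ∈ Set.range τ := hτ ▸ hsm_mem m
      obtain ⟨n, hn⟩ := this
      have : fderiv ℝ (f x) (sm m) (EuclideanSpace.single j (1:ℝ)) ∈ Sn n := by
        rw [← hn]; exact hmemx n
      exact Set.mem_union_left _ (Set.mem_iUnion.2 ⟨n, this⟩)
    refine he'key _ hmemcl (ψ j x) fun k => ?_
    have hck : fderiv ℝ (fun s => e' k (f x s)) t = (e' k).comp (fderiv ℝ (f x) t) :=
      ((e' k).hasFDerivAt.comp t (hdiff x hx t ht)).fderiv
    have := hbdx k hx t ht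
    rwa [pD, hck] at this
  have hboundsum : ∀ᵐ x ∂μ, ∀ t ∈ T, ‖fderiv ℝ (f x) t‖ ≤ ∑ j : Fin d, ‖ψ j x‖ := by
    filter_upwards [MeasureTheory.ae_all_iff.2 key] with x hx t ht
    calc ‖fderiv ℝ (f x) t‖
        ≤ ∑ j : Fin d, ‖fderiv ℝ (f x) t (EuclideanSpace.single j (1:ℝ))‖ := clm_norm_le_sum _
      _ ≤ ∑ j : Fin d, ‖ψ j x‖ := Finset.sum_le_sum fun j _ => hx j t ht
  have hbint : Integrable (fun x => ∑ j : Fin d, ‖ψ j x‖) μ :=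
    integrable_finset_sum _ fun j _ => (hψint j).norm
  have hmain : ∀ t₀ ∈ T, HasFDerivAt (fun t => ∫ x, f x t ∂μ)
      (∫ x, fderiv ℝ (f x) t₀ ∂μ) t₀ := by
    intro t₀ ht₀
    obtain ⟨ε, εpos, hball⟩ := Metric.isOpen_iff.1 hT t₀ ht₀
    apply hasFDerivAt_integral_of_dominated_of_fderiv_le
      (F' := fun t x => fderiv ℝ (f x) t) (bound := fun x => ∑ j : Fin d, ‖ψ j x‖) (Metric.ball_mem_nhds t₀ εpos)
    · filter_upwards [hT.mem_nhds ht₀] with t ht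
      exact (ha t ht).aestronglyMeasurable
    · exact ha t₀ ht₀
    · exact hmeasF' t₀ ht₀
    · filter_upwards [hboundsum] with x hx t htb
      exact hx t (hball htb)
    · exact hbint
    · filter_upwards [hae] with x hx t htb
      exact hdiff x hx t (hball htb)
  have hFint : ∀ t ∈ T, Integrable (fun x => fderiv ℝ (f x) t) μ := by
    intro t ht
    refine Integrable.mono' hbint (hmeasF' t ht) ?_
    filter_upwards [hboundsum] with x hx
    exact hx t ht
  have hcont : ContinuousOn (fun t => ∫ x, fderiv ℝ (f x) t ∂μ) T := by
    intro t₀ ht₀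
    apply ContinuousAt.continuousWithinAt
    apply continuousAt_of_dominated (bound := fun x => ∑ j : Fin d, ‖ψ j x‖)
    · filter_upwards [hT.mem_nhds ht₀] with t ht
      exact hmeasF' t ht
    · filter_upwards [hT.mem_nhds ht₀] with t ht
      filter_upwards [hboundsum] with x hx
      exact hx t ht
    · exact hbint
    · filter_upwards [hae] with x hx
      exact ((hb x hx).continuousOn_fderiv_of_isOpen hT le_rfl).continuousAt (hT.mem_nhds ht₀)
  have hgderiv : ∀ t ∈ T, fderiv ℝ (fun s => ∫ x, f x s ∂μ) t = ∫ x, fderiv ℝ (f x) t ∂μ :=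
    fun t ht => (hmain t ht).fderiv
  constructor
  · rw [show (1 : WithTop ℕ∞) = 0 + 1 by norm_num, contDiffOn_succ_iff_fderiv_of_isOpen hT]
    refine ⟨fun t ht => ((hmain t ht).differentiableAt).differentiableWithinAt, by simp, ?_⟩
    rw [contDiffOn_zero]
    exact hcont.congr hgderiv
  · intro t ht j
    simp only [pD]
    rw [hgderiv t ht, ContinuousLinearMap.integral_apply (hFint t ht)]
end Aux

/-- Leibniz' rule for differentiation under the (Bochner/Pettis)
integral sign. -/
theorem stmt6 {X : Type*} [MeasurableSpace X] (μ : Measure X)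
    {d : ℕ} (T : Set (EuclideanSpace ℝ (Fin d))) (hT : IsOpen T)
    {E : Type*} [NormedAddCommGroup E] [NormedSpace ℝ E] [CompleteSpace E]
    (f : X → EuclideanSpace ℝ (Fin d) → E)
    (ha : ∀ t ∈ T, Integrable (fun x => f x t) μ)
    (N₀ : Set X) (hN₀ : μ N₀ = 0)
    (hb : ∀ x ∉ N₀, ContDiffOn ℝ 1 (f x) T)
    (hc : ∀ j : Fin d, ∃ ψ : X → E, Integrable ψ μ ∧
      ∀ e' : E →L[ℝ] ℝ, ∀ᵐ x ∂μ, x ∉ N₀ →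
        ∀ t ∈ T, |pD j (fun s => e' (f x s)) t| ≤ |e' (ψ x)|) :
    ∀ Λ : Set X, MeasurableSet Λ →
      ContDiffOn ℝ 1 (fun t => ∫ x in Λ, f x t ∂μ) T ∧
      ∀ t ∈ T, ∀ j : Fin d,
        pD j (fun s => ∫ x in Λ, f x s ∂μ) t = ∫ x in Λ, pD j (f x) t ∂μ := by
  intro Λ _
  refine stmt6_aux (μ.restrict Λ) T hT f (fun t ht => (ha t ht).restrict) N₀ ?_ hb ?_
  · exact le_antisymm (le_trans (Measure.restrict_apply_le Λ N₀) hN₀.le) zero_le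
  · intro j
    obtain ⟨ψ, h1, h2⟩ := hc j
    exact ⟨ψ, h1.restrict, fun e' => ae_restrict_of_ae (h2 e')⟩
end

section
/- Approximation by regularisation in weighted C^k topology: let E be a quasi-complete locally convex Hausdorff space (or a Banach space), k ∈ ℕ₀ ∪ {∞}, Ω ⊂ ℝ^d open, V^k a locally bounded family of weights on Ω, and f ∈ C^k_c(Ω,E). Then (f∗ρ_n) → f in CV^k_0(Ω,E) as n → ∞; i.e. for all j, l, α: sup_{x∈Ω, |β|≤l} p_α(∂^β(f∗ρ_n − f)(x)) ν_{j,l}(x) → 0. -/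
open MeasureTheory
open scoped BigOperators

/-- The basic bump `x ↦ exp(−1/(1−|x|²))` for `|x| < 1`, `0` otherwise. -/
noncomputable def bump (d : ℕ) : EuclideanSpace ℝ (Fin d) → ℝ :=
  fun x => if ‖x‖ < 1 then Real.exp (-(1 - ‖x‖ ^ 2)⁻¹) else 0

/-- The normalising constant `C` with `∫ ρ = 1`. -/
noncomputable def bumpC (d : ℕ) : ℝ :=
  (∫ x in Metric.ball (0 : EuclideanSpace ℝ (Fin d)) 1, Real.exp (-(1 - ‖x‖ ^ 2)⁻¹))⁻¹

/-- The mollifier `ρ` of the paper: `ρ(x) = C·exp(−1/(1−|x|²))` for `|x| < 1`. -/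
noncomputable def rho (d : ℕ) : EuclideanSpace ℝ (Fin d) → ℝ :=
  fun x => bumpC d * bump d x

/-- The mollifier sequence `ρ_n(x) = n^d ρ(n x)`. -/
noncomputable def moll (d n : ℕ) : EuclideanSpace ℝ (Fin d) → ℝ :=
  fun x => (n : ℝ) ^ d * rho d ((n : ℝ) • x)

/-! ### Auxiliary lemmas -/

section Aux

variable {d : ℕ} {E : Type*} [NormedAddCommGroup E] [NormedSpace ℝ E] [CompleteSpace E]

local notation "X" => EuclideanSpace ℝ (Fin d)

lemma bump_eq : bump d = fun x : X => expNegInvGlue (1 - ‖x‖ ^ 2) := by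
  funext x
  have h0 : (0:ℝ) ≤ ‖x‖ := norm_nonneg x
  by_cases h : ‖x‖ < 1
  · have h' : ¬(1 - ‖x‖ ^ 2 ≤ 0) := by nlinarith
    simp [bump, expNegInvGlue, h, h']
  · have h' : 1 - ‖x‖ ^ 2 ≤ 0 := by nlinarith [not_lt.mp h]
    simp [bump, expNegInvGlue, h, h']

lemma bump_continuous : Continuous (bump d) := by
  rw [bump_eq]
  exact expNegInvGlue.contDiff (n := 0).continuous.comp
    (continuous_const.sub ((continuous_norm).pow 2))

lemma bump_nonneg : ∀ x : X, 0 ≤ bump d x := by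
  intro x
  simp only [bump_eq]
  exact expNegInvGlue.nonneg _

lemma bump_support : Function.support (bump d) = Metric.ball (0 : X) 1 := by
  rw [bump_eq]
  ext x
  simp only [Function.mem_support, ne_eq, expNegInvGlue.zero_iff_nonpos, not_le,
    Metric.mem_ball, dist_zero_right]
  constructor <;> intro h <;> nlinarith [norm_nonneg x]

lemma bump_hcs : HasCompactSupport (bump d) := by
  apply HasCompactSupport.intro (isCompact_closedBall (0 : X) 1)
  intro x hx
  simp only [Metric.mem_closedBall, dist_zero_right, not_le] at hx
  have : ¬ ‖x‖ < 1 := by linarith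
  simp [bump, this]

lemma bump_integrable : Integrable (bump d) (volume : Measure X) :=
  bump_continuous.integrable_of_hasCompactSupport bump_hcs

lemma bump_integral_pos : 0 < ∫ x : X, bump d x := by
  rw [integral_pos_iff_support_of_nonneg bump_nonneg bump_integrable, bump_support]
  exact Metric.measure_ball_pos _ _ one_pos

lemma bumpC_eq : bumpC d = (∫ x : X, bump d x)⁻¹ := by
  have h1 : ∫ x : X, bump d x = ∫ x in Metric.ball (0 : X) 1, bump d x := by
    refine (setIntegral_eq_integral_of_forall_compl_eq_zero (fun x hx => ?_)).symm
    simp only [Metric.mem_ball, dist_zero_right, not_lt] at hx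
    have : ¬ ‖x‖ < 1 := not_lt.mpr hx
    simp [bump, this]
  have h2 : ∫ x in Metric.ball (0 : X) 1, bump d x
      = ∫ x in Metric.ball (0 : X) 1, Real.exp (-(1 - ‖x‖ ^ 2)⁻¹) := by
    refine setIntegral_congr_fun measurableSet_ball (fun x hx => ?_)
    simp only [Metric.mem_ball, dist_zero_right] at hx
    simp [bump, hx]
  rw [bumpC, ← h2, ← h1]

lemma bumpC_pos : 0 < bumpC d := by
  rw [bumpC_eq]
  exact inv_pos.mpr bump_integral_pos

lemma rho_integral : ∫ x : X, rho d x = 1 := by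
  unfold rho
  rw [integral_const_mul, bumpC_eq]
  exact inv_mul_cancel₀ (ne_of_gt bump_integral_pos)

lemma rho_nonneg : ∀ x : X, 0 ≤ rho d x := fun x =>
  mul_nonneg bumpC_pos.le (bump_nonneg x)

lemma rho_continuous : Continuous (rho d) :=
  continuous_const.mul bump_continuous

lemma moll_nonneg (d n : ℕ) : ∀ x : EuclideanSpace ℝ (Fin d), 0 ≤ moll d n x := fun x =>
  mul_nonneg (by positivity) (rho_nonneg _)

lemma moll_continuous (d n : ℕ) : Continuous (moll d n) :=
  continuous_const.mul (rho_continuous.comp (continuous_const_smul _))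

lemma moll_locInt (d n : ℕ) : LocallyIntegrable (moll d n) (volume : Measure (EuclideanSpace ℝ (Fin d))) :=
  (moll_continuous d n).locallyIntegrable

lemma moll_integral {n : ℕ} (hn : 1 ≤ n) : ∫ x : X, moll d n x = 1 := by
  have hnpos : (0:ℝ) < n := by exact_mod_cast hn
  unfold moll
  rw [integral_const_mul, Measure.integral_comp_smul volume (rho d) (n : ℝ),
    finrank_euclideanSpace_fin, rho_integral, smul_eq_mul, mul_one, abs_of_nonneg (by positivity)]
  exact mul_inv_cancel₀ (by positivity)

lemma moll_support {n : ℕ} (hn : 1 ≤ n) :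
    Function.support (moll d n) ⊆ Metric.closedBall (0 : X) ((n : ℝ)⁻¹) := by
  have hnpos : (0:ℝ) < n := by exact_mod_cast hn
  intro x hx
  rw [Function.mem_support] at hx
  have hb : bump d ((n : ℝ) • x) ≠ 0 := by
    intro h
    apply hx
    simp [moll, rho, h]
  have : ((n : ℝ) • x) ∈ Function.support (bump d) := Function.mem_support.mpr hb
  rw [bump_support, Metric.mem_ball, dist_zero_right, norm_smul] at this
  simp only [Real.norm_natCast] at this
  rw [Metric.mem_closedBall, dist_zero_right, ← one_div, le_div_iff₀ hnpos]
  nlinarith [this]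

lemma moll_hcs {n : ℕ} (hn : 1 ≤ n) : HasCompactSupport (moll d n) :=
  HasCompactSupport.intro (isCompact_closedBall (0 : X) ((n:ℝ)⁻¹))
    (fun x hx => by
      by_contra h
      exact hx (moll_support hn (Function.mem_support.mpr h)))

/-- The mollification operator. -/
noncomputable def conv (d n : ℕ) (g : EuclideanSpace ℝ (Fin d) → E) :
    EuclideanSpace ℝ (Fin d) → E :=
  MeasureTheory.convolution (moll d n) g (ContinuousLinearMap.lsmul ℝ ℝ) volume

lemma conv_eq (n : ℕ) (g : X → E) (x : X) :
    conv d n g x = ∫ y, moll d n (x - y) • g y := by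
  rw [conv, convolution_eq_swap]
  simp only [ContinuousLinearMap.lsmul_apply]

lemma pD_conv (n : ℕ) (i : Fin d) {g : X → E} (hg : ContDiff ℝ 1 g)
    (hgc : HasCompactSupport g) : pD i (conv d n g) = conv d n (pD i g) := by
  funext x
  have hd := hgc.hasFDerivAt_convolution_right (ContinuousLinearMap.lsmul ℝ ℝ)
    (moll_locInt d n) hg x
  have h1 := hd.fderiv
  show fderiv ℝ (conv d n g) x (EuclideanSpace.single i (1:ℝ)) = _
  rw [show fderiv ℝ (conv d n g) = fderiv ℝ (convolution (moll d n) g (ContinuousLinearMap.lsmul ℝ ℝ) volume) from rfl, h1,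
    convolution_precompR_apply (ContinuousLinearMap.lsmul ℝ ℝ) (moll_locInt d n)
      (hgc.fderiv ℝ) (hg.continuous_fderiv one_ne_zero)]
  rfl

lemma pD_contDiff {m : ℕ} {g : X → E} (hg : ContDiff ℝ ((m+1 : ℕ) : ℕ∞) g) (i : Fin d) :
    ContDiff ℝ (m : ℕ) (pD i g) := by
  have h1 : ContDiff ℝ (m : ℕ) (fderiv ℝ g) :=
    hg.fderiv_right (by push_cast; exact le_rfl)
  exact (ContinuousLinearMap.apply ℝ E (EuclideanSpace.single i (1:ℝ))).contDiff.comp h1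

lemma pD_support (g : X → E) (i : Fin d) :
    Function.support (pD i g) ⊆ tsupport g := fun x hx =>
  support_fderiv_subset ℝ (show fderiv ℝ g x ≠ 0 from fun h => hx (by simp [pD, h]))

lemma pD_tsupport (g : X → E) (i : Fin d) : tsupport (pD i g) ⊆ tsupport g :=
  closure_minimal (pD_support g i) (isClosed_tsupport g)

lemma pD_hcs {g : X → E} (hgc : HasCompactSupport g) (i : Fin d) :
    HasCompactSupport (pD i g) :=
  hgc.mono' (pD_support g i)

lemma pD_sub {g h : X → E} (hg : Differentiable ℝ g) (hh : Differentiable ℝ h) (i : Fin d) :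
    pD i (fun z => g z - h z) = fun z => pD i g z - pD i h z := by
  funext x
  simp only [pD]
  rw [fderiv_fun_sub (hg x) (hh x)]
  simp

lemma pD_iter (i : Fin d) : ∀ (j m : ℕ) (g : X → E),
    ContDiff ℝ ((m + j : ℕ) : ℕ∞) g → HasCompactSupport g →
    ContDiff ℝ ((m : ℕ) : ℕ∞) ((pD i)^[j] g) ∧ HasCompactSupport ((pD i)^[j] g) ∧
      tsupport ((pD i)^[j] g) ⊆ tsupport g ∧
      ∀ n, (pD i)^[j] (conv d n g) = conv d n ((pD i)^[j] g) := by
  intro j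
  induction j with
  | zero =>
    intro m g hg hgc
    exact ⟨hg, hgc, subset_rfl, fun n => rfl⟩
  | succ j ih =>
    intro m g hg hgc
    have hg1 : ContDiff ℝ (((m + j) + 1 : ℕ) : ℕ∞) g := by
      have : m + (j + 1) = (m + j) + 1 := by omega
      rwa [this] at hg
    have hpd : ContDiff ℝ ((m + j : ℕ) : ℕ∞) (pD i g) := pD_contDiff hg1 i
    have hpdc := pD_hcs hgc i
    obtain ⟨h1, h2, h3, h4⟩ := ih m (pD i g) hpd hpdc
    refine ⟨?_, ?_, ?_, fun n => ?_⟩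
    · rw [Function.iterate_succ_apply]; exact h1
    · rw [Function.iterate_succ_apply]; exact h2
    · rw [Function.iterate_succ_apply]; exact h3.trans (pD_tsupport g i)
    · rw [Function.iterate_succ_apply, Function.iterate_succ_apply,
        pD_conv n i (hg.of_le (by exact_mod_cast Nat.one_le_iff_ne_zero.mpr (by omega))) hgc,
        h4 n]

lemma pD_iter_sub (i : Fin d) : ∀ (j : ℕ) (g h : X → E),
    ContDiff ℝ ((j : ℕ) : ℕ∞) g → ContDiff ℝ ((j : ℕ) : ℕ∞) h →
    (pD i)^[j] (fun z => g z - h z) = fun z => (pD i)^[j] g z - (pD i)^[j] h z := by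
  intro j
  induction j with
  | zero => intro g h _ _; simp
  | succ j ih =>
    intro g h hg hh
    have h1 : (((j + 1 : ℕ) : ℕ∞) : WithTop ℕ∞) ≠ 0 := by
      exact_mod_cast Nat.succ_ne_zero j
    rw [Function.iterate_succ_apply, Function.iterate_succ_apply,
      Function.iterate_succ_apply (pD i) j h, pD_sub (hg.differentiable h1) (hh.differentiable h1) i,
      ih (pD i g) (pD i h) (pD_contDiff hg i) (pD_contDiff hh i)]

lemma foldr_all (β : Fin d → ℕ) : ∀ (L : List (Fin d)) (m : ℕ) (g : X → E),
    ContDiff ℝ ((m + (L.map β).sum : ℕ) : ℕ∞) g → HasCompactSupport g →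
    ContDiff ℝ ((m : ℕ) : ℕ∞) (L.foldr (fun i h => (pD i)^[β i] h) g) ∧
    HasCompactSupport (L.foldr (fun i h => (pD i)^[β i] h) g) ∧
    tsupport (L.foldr (fun i h => (pD i)^[β i] h) g) ⊆ tsupport g ∧
    ∀ n, L.foldr (fun i h => (pD i)^[β i] h) (conv d n g)
      = conv d n (L.foldr (fun i h => (pD i)^[β i] h) g) := by
  intro L
  induction L with
  | nil => intro m g hg hgc; exact ⟨hg, hgc, subset_rfl, fun n => rfl⟩
  | cons i L ih =>
    intro m g hg hgc
    have hg' : ContDiff ℝ (((m + β i) + (L.map β).sum : ℕ) : ℕ∞) g := by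
      have : m + ((i :: L).map β).sum = (m + β i) + (L.map β).sum := by
        simp [List.map_cons, List.sum_cons]; omega
      rwa [this] at hg
    obtain ⟨h1, h2, h3, h4⟩ := ih (m + β i) g hg' hgc
    obtain ⟨p1, p2, p3, p4⟩ := pD_iter i (β i) m _ h1 h2
    refine ⟨p1, p2, p3.trans h3, fun n => ?_⟩
    show (pD i)^[β i] (L.foldr _ (conv d n g)) = conv d n ((pD i)^[β i] (L.foldr _ g))
    rw [h4 n, p4 n]

lemma foldr_sub (β : Fin d → ℕ) : ∀ (L : List (Fin d)) (g h : X → E),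
    ContDiff ℝ (((L.map β).sum : ℕ) : ℕ∞) g → HasCompactSupport g →
    ContDiff ℝ (((L.map β).sum : ℕ) : ℕ∞) h → HasCompactSupport h →
    L.foldr (fun i h' => (pD i)^[β i] h') (fun z => g z - h z)
      = fun z => L.foldr (fun i h' => (pD i)^[β i] h') g z
          - L.foldr (fun i h' => (pD i)^[β i] h') h z := by
  intro L
  induction L with
  | nil => intro g h _ _ _ _; rfl
  | cons i L ih =>
    intro g h hg hgc hh hhc
    have hsum : (((i :: L).map β).sum : ℕ) = β i + (L.map β).sum := by
      simp [List.map_cons, List.sum_cons]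
    have hg' : ContDiff ℝ (((L.map β).sum : ℕ) : ℕ∞) g :=
      hg.of_le (by exact_mod_cast by rw [hsum] at *; omega)
    have hh' : ContDiff ℝ (((L.map β).sum : ℕ) : ℕ∞) h :=
      hh.of_le (by exact_mod_cast by rw [hsum] at *; omega)
    have hgfold : ContDiff ℝ ((β i : ℕ) : ℕ∞) (L.foldr (fun i h' => (pD i)^[β i] h') g) := by
      refine (foldr_all β L (β i) g ?_ hgc).1
      rwa [show ((β i + (L.map β).sum : ℕ) : ℕ∞) = ((((i :: L).map β).sum : ℕ) : ℕ∞) by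
        rw [hsum]]
    have hhfold : ContDiff ℝ ((β i : ℕ) : ℕ∞) (L.foldr (fun i h' => (pD i)^[β i] h') h) := by
      refine (foldr_all β L (β i) h ?_ hhc).1
      rwa [show ((β i + (L.map β).sum : ℕ) : ℕ∞) = ((((i :: L).map β).sum : ℕ) : ℕ∞) by
        rw [hsum]]
    show (pD i)^[β i] (L.foldr _ (fun z => g z - h z)) = _
    rw [ih g h hg' hgc hh' hhc, pD_iter_sub i (β i) _ _ hgfold hhfold]
    rfl

lemma mD_eq_foldr (β : Fin d → ℕ) (g : X → E) :
    mD β g = (List.finRange d).foldr (fun i h => (pD i)^[β i] h) g := by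
  rw [mD, Fin.foldr_eq_foldr_finRange]

lemma finRange_sum (β : Fin d → ℕ) : ((List.finRange d).map β).sum = ∑ i, β i :=
  (Fin.sum_univ_def β).symm

end Aux

/-- approximation by regularisation: for a compactly supported `C^k`
function `f` (extended by zero outside `Ω`), the mollifications `f ∗ ρ_n` converge
to `f` in the weighted topology of `CV^k_0(Ω,E)`, provided the weights are locally
bounded. -/
theorem stmt12 {d : ℕ} {E : Type*} [NormedAddCommGroup E] [NormedSpace ℝ E]
    [CompleteSpace E] {J : Type*} (k : ℕ∞)
    (Ω : Set (EuclideanSpace ℝ (Fin d))) (hΩ : IsOpen Ω)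
    (ν : J → ℕ → EuclideanSpace ℝ (Fin d) → ℝ)
    (hν_nonneg : ∀ j l x, 0 ≤ ν j l x)
    (hν_locbdd : ∀ K : Set (EuclideanSpace ℝ (Fin d)), K ⊆ Ω → IsCompact K →
      ∀ (j : J) (l : ℕ), ∃ M : ℝ, ∀ x ∈ K, ν j l x ≤ M)
    (f : EuclideanSpace ℝ (Fin d) → E)
    (hf : ContDiff ℝ k f) (hfc : HasCompactSupport f) (hfs : tsupport f ⊆ Ω) :
    ∀ (j : J) (l : ℕ), (l : ℕ∞) ≤ k → ∀ ε > (0:ℝ), ∃ N : ℕ, ∀ n ≥ N,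
      ∀ x ∈ Ω, ∀ β : Fin d → ℕ, (∑ i, β i) ≤ l →
        ‖mD β (fun z => (∫ y, moll d n (z - y) • f y) - f z) x‖ * ν j l x ≤ ε := by
  intro j l hlk ε hε
  have hfl : ContDiff ℝ ((l : ℕ) : ℕ∞) f := hf.of_le (by exact_mod_cast hlk)
  obtain ⟨δ₀, hδ₀pos, hKsub⟩ := hfc.exists_cthickening_subset_open hΩ hfs
  set K := Metric.cthickening δ₀ (tsupport f) with hKdef
  have hKcomp : IsCompact K := hfc.cthickening
  obtain ⟨M, hM⟩ := hν_locbdd K hKsub hKcomp j l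
  set M' := max M 1 with hM'def
  have hM' : (0:ℝ) < M' := lt_of_lt_of_le one_pos (le_max_right _ _)
  set ε' := ε / M' with hε'def
  have hε' : 0 < ε' := div_pos hε hM'
  have key : ∀ β' : Fin d → Fin (l+1), ∀ᶠ n : ℕ in Filter.atTop,
      (∑ i, ((β' i : ℕ))) ≤ l → ∀ x ∈ Ω,
      ‖mD (fun i => (β' i : ℕ)) (fun z => (∫ y, moll d n (z - y) • f y) - f z) x‖
        * ν j l x ≤ ε := by
    intro β'
    set β : Fin d → ℕ := fun i => (β' i : ℕ) with hβdef
    by_cases hβ : (∑ i, β i) ≤ l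
    swap
    · exact Filter.Eventually.of_forall (fun n h => absurd h hβ)
    have hsum_eq : ((List.finRange d).map β).sum = ∑ i, β i := finRange_sum β
    -- the iterated derivative of `f`
    have hfβ : ContDiff ℝ (((l - ∑ i, β i) + ((List.finRange d).map β).sum : ℕ) : ℕ∞) f := by
      have : (l - ∑ i, β i) + ((List.finRange d).map β).sum = l := by rw [hsum_eq]; omega
      rwa [this]
    obtain ⟨hgβ_cd, hgβ_hcs, hgβ_supp, hgβ_conv⟩ :=
      foldr_all β (List.finRange d) (l - ∑ i, β i) f hfβ hfc
    set gβ := (List.finRange d).foldr (fun i h => (pD i)^[β i] h) f with hgβdef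
    have hgβc : Continuous gβ := hgβ_cd.continuous
    have huc : UniformContinuous gβ :=
      hgβc.uniformContinuous_of_tendsto_cocompact hgβ_hcs.is_zero_at_infty
    rw [Metric.uniformContinuous_iff] at huc
    obtain ⟨δ, hδpos, hδ⟩ := huc ε' hε'
    have hmin : 0 < min δ δ₀ := lt_min hδpos hδ₀pos
    obtain ⟨N₀, hN₀⟩ := exists_nat_gt (max 1 (2 / min δ δ₀))
    rw [Filter.eventually_atTop]
    refine ⟨N₀, fun n hn _ x hx => ?_⟩
    have hn1 : 1 ≤ n := by
      have h1 : (1:ℝ) < N₀ := lt_of_le_of_lt (le_max_left _ _) hN₀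
      have : (1:ℝ) < n := lt_of_lt_of_le h1 (by exact_mod_cast hn)
      exact_mod_cast this.le
    have hnpos : (0:ℝ) < n := by exact_mod_cast hn1
    have h2n : 2 / (n:ℝ) < min δ δ₀ := by
      have ha : 2 / min δ δ₀ < (n:ℝ) :=
        lt_of_lt_of_le (lt_of_le_of_lt (le_max_right _ _) hN₀) (by exact_mod_cast hn)
      rw [div_lt_iff₀ hmin] at ha
      rw [div_lt_iff₀ hnpos]
      linarith [mul_comm (2 / min δ δ₀) (min δ δ₀)]
    have hinv2 : (n:ℝ)⁻¹ < 2 / n := by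
      rw [div_eq_mul_inv]
      nlinarith [inv_pos.mpr hnpos]
    -- rewrite the function as a difference of convolutions
    have hrw : (fun z => (∫ y, moll d n (z - y) • f y) - f z)
        = (fun z => conv d n f z - f z) := by
      funext z; rw [conv_eq]
    have hf_sum : ContDiff ℝ ((((List.finRange d).map β).sum : ℕ) : ℕ∞) f :=
      hfl.of_le (by exact_mod_cast by rw [hsum_eq]; exact hβ)
    have hconv_cd : ContDiff ℝ ((((List.finRange d).map β).sum : ℕ) : ℕ∞) (conv d n f) := by
      unfold conv
      exact hfc.contDiff_convolution_right (ContinuousLinearMap.lsmul ℝ ℝ)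
        (moll_locInt d n) hf_sum
    have hconv_hcs : HasCompactSupport (conv d n f) := by
      unfold conv
      exact HasCompactSupport.convolution (L := ContinuousLinearMap.lsmul ℝ ℝ) (moll_hcs hn1) hfc
    have hmds := foldr_sub β (List.finRange d) (conv d n f) f
      hconv_cd hconv_hcs hf_sum hfc
    rw [hrw, mD_eq_foldr, hmds, hgβ_conv n, ← hgβdef]
    show ‖conv d n gβ x - gβ x‖ * ν j l x ≤ ε
    by_cases hxK : x ∈ K
    · have hd : dist (conv d n gβ x) (gβ x) ≤ ε' := by
        refine dist_convolution_le (R := 2/(n:ℝ)) hε'.le ?_ (moll_nonneg d n) (moll_integral hn1)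
          hgβc.aestronglyMeasurable ?_
        · refine (moll_support hn1).trans ?_
          intro y hy
          rw [Metric.mem_closedBall, dist_zero_right] at hy
          rw [Metric.mem_ball, dist_zero_right]
          linarith
        · intro y hy
          rw [Metric.mem_ball] at hy
          have : dist y x < δ := by
            have := lt_min_iff.mp h2n
            linarith [this.1]
          exact (hδ this).le
      rw [← dist_eq_norm]
      calc dist (conv d n gβ x) (gβ x) * ν j l x
          ≤ ε' * M' := mul_le_mul hd (le_trans (hM x hxK) (le_max_left _ _))
            (hν_nonneg j l x) hε'.le
        _ = ε := div_mul_cancel₀ ε (ne_of_gt hM')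
    · have hzero1 : gβ x = 0 := by
        by_contra h
        exact hxK (Metric.self_subset_cthickening _
          (hgβ_supp (subset_closure (Function.mem_support.mpr h))))
      have hzero2 : conv d n gβ x = 0 := by
        rw [conv, convolution_def]
        have hzero : (fun t => (ContinuousLinearMap.lsmul ℝ ℝ) (moll d n t) (gβ (x - t)))
            = fun _ => (0 : E) := by
          funext t
          rcases eq_or_ne (moll d n t) 0 with h | h
          · simp [h]
          · rcases eq_or_ne (gβ (x - t)) 0 with h2 | h2
            · simp [h2]
            · exfalso
              have ht : ‖t‖ ≤ (n:ℝ)⁻¹ := by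
                have := moll_support hn1 (Function.mem_support.mpr h)
                simpa [Metric.mem_closedBall, dist_zero_right] using this
              have hxt : x - t ∈ tsupport f :=
                hgβ_supp (subset_closure (Function.mem_support.mpr h2))
              apply hxK
              apply Metric.mem_cthickening_of_dist_le x (x - t) δ₀ _ hxt
              have hdist : dist x (x - t) = ‖t‖ := by
                rw [dist_eq_norm]
                congr 1
                abel
              rw [hdist]
              have := lt_min_iff.mp h2n
              linarith [this.2]
        rw [hzero, integral_zero]
      rw [hzero1, hzero2]
      simp only [sub_zero, norm_zero, zero_mul]
      exact hε.le
  have key2 := Filter.eventually_all.2 key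
  rw [Filter.eventually_atTop] at key2
  obtain ⟨N, hN⟩ := key2
  refine ⟨N, fun n hn x hx β hβ => ?_⟩
  have hβi : ∀ i, β i < l + 1 := fun i =>
    Nat.lt_succ_of_le (le_trans
      (Finset.single_le_sum (f := β) (fun _ _ => Nat.zero_le _) (Finset.mem_univ i)) hβ)
  exact hN n hn (fun i => (⟨β i, hβi i⟩ : Fin (l+1))) hβ x hx
end

section
/- Partition-of-unity approximation of continuous functions in weighted sup-norms: let E be a locally convex Hausdorff space (or a Banach space), Ω a locally compact Hausdorff space, ν : Ω → [0,∞) locally bounded, f : Ω → E continuous, K ⊂ Ω compact with sup_{x∈Ω\K} p_α(f(x)) ν(x) < ε. Then there exist n ∈ ℕ, points x₁,…,x_n ∈ K and nonnegative continuous compactly supported functions φ₁,…,φ_n with Σφ_i = 1 on K and Σφ_i ≤ 1 everywhere, such that g := Σ_{i=1}^n φ_i · f(x_i) satisfies sup_{x∈Ω} p_α(f(x) − g(x)) ν(x) < 4ε. -/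
open scoped BigOperators

open Set

/-- partition-of-unity approximation of a continuous function in a
weighted sup-norm: outside a compact `K` the weighted norm of `f` is `< ε` (i.e.
there is `c < ε` dominating it), and then `f` is `4ε`-approximated by a finite sum
`Σ φ_i • f(x_i)` with `x_i ∈ K` and a subordinate family of nonnegative compactly
supported continuous functions with `Σ φ_i = 1` on `K` and `Σ φ_i ≤ 1` everywhere. -/
theorem stmt17 {Ω : Type*} [TopologicalSpace Ω] [LocallyCompactSpace Ω] [T2Space Ω]
    {E : Type*} [NormedAddCommGroup E] [NormedSpace ℝ E]
    (ν : Ω → ℝ) (hν_nonneg : ∀ x, 0 ≤ ν x)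
    (hν_locbdd : ∀ K : Set Ω, IsCompact K → ∃ M : ℝ, ∀ x ∈ K, ν x ≤ M)
    (f : Ω → E) (hf : Continuous f)
    (K : Set Ω) (hK : IsCompact K) (ε : ℝ) (hε : 0 < ε)
    (hout : ∃ c : ℝ, c < ε ∧ ∀ x ∉ K, ‖f x‖ * ν x ≤ c) :
    ∃ (n : ℕ) (x : Fin n → Ω) (φ : Fin n → Ω → ℝ),
      (∀ i, x i ∈ K) ∧
      (∀ i, Continuous (φ i) ∧ HasCompactSupport (φ i) ∧ ∀ z, 0 ≤ φ i z) ∧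
      (∀ z ∈ K, ∑ i, φ i z = 1) ∧
      (∀ z, ∑ i, φ i z ≤ 1) ∧
      ∀ z, ‖f z - ∑ i, φ i z • f (x i)‖ * ν z < 4 * ε := by
  obtain ⟨c, hc, hcout⟩ := hout
  -- a compact neighborhood of K and a bound M on ν there
  obtain ⟨L, hL, hKL⟩ := exists_compact_superset hK
  obtain ⟨M₀, hM₀⟩ := hν_locbdd L hL
  set M : ℝ := max M₀ 0 with hM
  have hM0 : 0 ≤ M := le_max_right _ _
  have hνL : ∀ x ∈ L, ν x ≤ M := fun x hx => le_trans (hM₀ x hx) (le_max_left _ _)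
  set δ : ℝ := ε / (M + 1) with hδ
  have hδpos : 0 < δ := div_pos hε (by linarith)
  have hδM : δ * M < ε := by
    rw [hδ]
    rw [div_mul_eq_mul_div, div_lt_iff₀ (by linarith : (0:ℝ) < M + 1)]
    nlinarith
  -- neighborhoods where f varies by less than δ, inside interior L
  have hUex : ∀ k : Ω, ∃ V : Set Ω, IsOpen V ∧ k ∈ V ∧ ∀ y ∈ V, ‖f y - f k‖ < δ := by
    intro k
    have : {y : Ω | ‖f y - f k‖ < δ} ∈ nhds k := by
      have hc : Continuous fun y => ‖f y - f k‖ := (hf.sub continuous_const).norm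
      have : IsOpen {y : Ω | ‖f y - f k‖ < δ} := isOpen_lt hc continuous_const
      exact this.mem_nhds (by simp [hδpos])
    obtain ⟨V, hVsub, hVopen, hkV⟩ := mem_nhds_iff.mp this
    exact ⟨V, hVopen, hkV, fun y hy => hVsub hy⟩
  choose V hVopen hVmem hVδ using hUex
  set U : Ω → Set Ω := fun k => V k ∩ interior L with hU
  have hUopen : ∀ k, IsOpen (U k) := fun k => (hVopen k).inter isOpen_interior
  -- finite subcover indexed by points of K
  have hcover : K ⊆ ⋃ k : K, U (k : Ω) := by
    intro z hz
    exact mem_iUnion.mpr ⟨⟨z, hz⟩, hVmem z, hKL hz⟩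
  obtain ⟨t, ht⟩ := hK.elim_finite_subcover (fun k : K => U (k : Ω))
    (fun k => hUopen _) hcover
  set n : ℕ := t.card with hn
  set e : ↥t ≃ Fin n := t.equivFin with he
  set x : Fin n → Ω := fun i => ((e.symm i : K) : Ω) with hx
  set U' : Fin n → Set Ω := fun i => U (x i) with hU'
  have hcover' : K ⊆ ⋃ i, U' i := by
    intro z hz
    obtain ⟨k, hk⟩ := mem_iUnion.mp (ht hz)
    obtain ⟨hkt, hkU⟩ := mem_iUnion.mp hk
    refine mem_iUnion.mpr ⟨e ⟨k, hkt⟩, ?_⟩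
    simpa [hU', hx, Equiv.symm_apply_apply] using hkU
  obtain ⟨p, hpsub, hpcp⟩ :=
    PartitionOfUnity.exists_isSubordinate_of_locallyFinite_t2space hK U'
      (fun i => hUopen _) (locallyFinite_of_finite _) hcover'
  refine ⟨n, x, fun i => p i, fun i => (e.symm i : K).2, ?_, ?_, ?_, ?_⟩
  · exact fun i => ⟨(p i).continuous, hpcp i, fun z => p.nonneg i z⟩
  · intro z hz
    have := p.sum_eq_one hz
    rwa [finsum_eq_sum_of_fintype] at this
  · intro z
    have := p.sum_le_one z
    rwa [finsum_eq_sum_of_fintype] at this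
  · intro z
    set s : ℝ := ∑ i, p i z with hs
    have hs1 : s ≤ 1 := by
      have := p.sum_le_one z
      rwa [finsum_eq_sum_of_fintype] at this
    have hs0 : 0 ≤ s := Finset.sum_nonneg fun i _ => p.nonneg i z
    -- algebraic identity
    have key : f z - ∑ i, p i z • f (x i)
        = (1 - s) • f z + ∑ i, p i z • (f z - f (x i)) := by
      simp only [smul_sub, sub_smul, one_smul, Finset.sum_sub_distrib, hs,
        Finset.sum_smul]
      abel
    -- bound second term
    have hterm : ∀ i, p i z * ‖f z - f (x i)‖ ≤ p i z * δ := by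
      intro i
      rcases eq_or_ne (p i z) 0 with h0 | h0
      · simp [h0]
      · have hzU : z ∈ U' i := hpsub i (subset_tsupport _ h0)
        have : ‖f z - f (x i)‖ < δ := hVδ (x i) z hzU.1
        exact mul_le_mul_of_nonneg_left this.le (p.nonneg i z)
    have hB : (∑ i, p i z * ‖f z - f (x i)‖) * ν z ≤ δ * M := by
      rcases Classical.em (∀ i, p i z = 0) with hall | hex
      · simp only [fun i => hall i, zero_mul, Finset.sum_const_zero, zero_mul]
        positivity
      · push_neg at hex
        obtain ⟨i, hi⟩ := hex
        have hzL : z ∈ L := interior_subset (hpsub i (subset_tsupport _ hi)).2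
        have h1 : (∑ i, p i z * ‖f z - f (x i)‖) ≤ δ := by
          calc (∑ i, p i z * ‖f z - f (x i)‖) ≤ ∑ i, p i z * δ :=
                Finset.sum_le_sum fun i _ => hterm i
            _ = s * δ := by rw [← Finset.sum_mul]
            _ ≤ 1 * δ := mul_le_mul_of_nonneg_right hs1 hδpos.le
            _ = δ := one_mul δ
        have h2 : ν z ≤ M := hνL z hzL
        have hsum0 : 0 ≤ ∑ i, p i z * ‖f z - f (x i)‖ :=
          Finset.sum_nonneg fun i _ => mul_nonneg (p.nonneg i z) (norm_nonneg _)
        exact mul_le_mul h1 h2 (hν_nonneg z) hδpos.le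
    have hnorm : ‖f z - ∑ i, p i z • f (x i)‖
        ≤ (1 - s) * ‖f z‖ + ∑ i, p i z * ‖f z - f (x i)‖ := by
      rw [key]
      refine le_trans (norm_add_le _ _) ?_
      gcongr
      · rw [norm_smul, Real.norm_eq_abs, abs_of_nonneg (by linarith)]
      · refine le_trans (norm_sum_le _ _) ?_
        refine Finset.sum_le_sum fun i _ => ?_
        rw [norm_smul, Real.norm_eq_abs, abs_of_nonneg (p.nonneg i z)]
    have hmul : ‖f z - ∑ i, p i z • f (x i)‖ * ν z
        ≤ (1 - s) * ‖f z‖ * ν z + (∑ i, p i z * ‖f z - f (x i)‖) * ν z := by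
      rw [← add_mul]
      exact mul_le_mul_of_nonneg_right hnorm (hν_nonneg z)
    rcases Classical.em (z ∈ K) with hzK | hzK
    · have hsK : s = 1 := by
        have := p.sum_eq_one hzK
        rwa [finsum_eq_sum_of_fintype] at this
      have : ‖f z - ∑ i, p i z • f (x i)‖ * ν z ≤ δ * M := by
        refine le_trans hmul ?_
        rw [hsK]
        simpa using hB
      nlinarith
    · have hA : (1 - s) * ‖f z‖ * ν z ≤ c := by
        have hfν : ‖f z‖ * ν z ≤ c := hcout z hzK
        have hfν0 : 0 ≤ ‖f z‖ * ν z := mul_nonneg (norm_nonneg _) (hν_nonneg z)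
        calc (1 - s) * ‖f z‖ * ν z = (1 - s) * (‖f z‖ * ν z) := by ring
          _ ≤ 1 * (‖f z‖ * ν z) := by
              exact mul_le_mul_of_nonneg_right (by linarith) hfν0
          _ = ‖f z‖ * ν z := one_mul _
          _ ≤ c := hfν
      have : ‖f z - ∑ i, p i z • f (x i)‖ * ν z ≤ c + δ * M :=
        le_trans hmul (add_le_add hA hB)
      nlinarith
end
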